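/- Follow-the-Leader makes mistakes: there exist absolute constants c > 0, d > 0 and K₀ ∈ ℕ such that for every integer K ≥ K₀, every ε with 0 < ε < d, and every integer T with c·ln K/(2ε²) ≤ T ≤ c·ln K/ε², one has ∑_{j=1}^K P_j{FTL(ω) = j} ≤ K/4. -/

import Mathlib

open MeasureTheory

/-- The Bernoulli measure on `Bool` with success probability `p` (for `p ∈ [0,1]`). -/
noncomputable def bern (p : ℝ) : Measure Bool :=
  (PMF.bernoulli (min (Real.toNNReal p) 1) (min_le_right _ _)).toMeasure

/-- The lower-bound instance `I_j`: the product measure on `K × T` reward matrices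
under which all entries are independent, entries of row `j` are Bernoulli((1+ε)/2),
and entries of every other row are Bernoulli(1/2). -/
noncomputable def lowerP (K T : ℕ) (ε : ℝ) (j : Fin K) :
    Measure (Fin K → Fin T → Bool) :=
  Measure.pi fun k => Measure.pi fun _ : Fin T =>
    bern (if k = j then (1 + ε) / 2 else 1 / 2)

/-- The number of wins `w_k(ω) = #{t : ω_{k,t} = 1}` of arm `k`. -/
def wins {K T : ℕ} (ω : Fin K → Fin T → Bool) (k : Fin K) : ℕ :=
  (Finset.univ.filter fun t : Fin T => ω k t = true).card

/-- The Follow-the-Leader prediction: the smallest index maximizing `w_k(ω)`. -/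
noncomputable def FTL {K T : ℕ} [NeZero K] (ω : Fin K → Fin T → Bool) : Fin K :=
  (Finset.univ.filter fun k : Fin K => ∀ k', wins ω k' ≤ wins ω k).min' (by
    obtain ⟨b, -, hb⟩ :=
      Finset.exists_max_image Finset.univ (wins ω) Finset.univ_nonempty
    exact ⟨b, Finset.mem_filter.mpr
      ⟨Finset.mem_univ b, fun k' => hb k' (Finset.mem_univ k')⟩⟩)

/-- **Follow-the-Leader makes mistakes.** There are absolute constants `c, d > 0` and
`K₀ ≥ 1` such that for every `K ≥ K₀`, every `0 < ε < d` and every horizon `T` with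
`c ln K / (2 ε²) ≤ T ≤ c ln K / ε²`, one has `∑_j P_j{FTL(ω) = j} ≤ K / 4`. -/
instance (p : ℝ) : IsProbabilityMeasure (bern p) :=
  PMF.toMeasure.isProbabilityMeasure _

namespace FTLproof

open Finset Real

variable {K T : ℕ}

lemma bern_apply {p : ℝ} (h0 : 0 ≤ p) (h1 : p ≤ 1) (b : Bool) :
    bern p {b} = ENNReal.ofReal (if b then p else 1 - p) := by
  rw [bern, PMF.toMeasure_apply_singleton _ _ (measurableSet_singleton b)]
  have hmin : min (Real.toNNReal p) 1 = Real.toNNReal p :=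
    min_eq_left (Real.toNNReal_le_one.2 h1)
  rw [PMF.bernoulli_apply, hmin]
  cases b
  · simp only [Bool.cond_false, Bool.false_eq_true, if_false]
    rw [ENNReal.coe_sub, ENNReal.coe_one]
    show (1:ENNReal) - ENNReal.ofReal p = _
    rw [← ENNReal.ofReal_one, ← ENNReal.ofReal_sub _ h0]
  · rfl

noncomputable def pr (ε : ℝ) (j k : Fin K) : ℝ := if k = j then (1 + ε) / 2 else 1 / 2

noncomputable def dens (ε : ℝ) (j : Fin K) (ω : Fin K → Fin T → Bool) : ℝ :=
  ∏ k, ∏ t, (if ω k t then pr ε j k else 1 - pr ε j k)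

lemma pr_nonneg {ε : ℝ} (h0 : 0 ≤ ε) (j k : Fin K) : 0 ≤ pr ε j k := by
  unfold pr; split <;> linarith

lemma pr_le_one {ε : ℝ} (h1 : ε ≤ 1) (j k : Fin K) : pr ε j k ≤ 1 := by
  unfold pr; split <;> linarith

lemma dens_nonneg {ε : ℝ} (h0 : 0 ≤ ε) (h1 : ε ≤ 1) (j : Fin K)
    (ω : Fin K → Fin T → Bool) : 0 ≤ dens ε j ω := by
  refine Finset.prod_nonneg fun k _ => Finset.prod_nonneg fun t _ => ?_
  split
  · exact pr_nonneg h0 j k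
  · linarith [pr_le_one h1 j k]

lemma lowerP_singleton {ε : ℝ} (h0 : 0 ≤ ε) (h1 : ε ≤ 1) (j : Fin K)
    (ω : Fin K → Fin T → Bool) :
    lowerP K T ε j {ω} = ENNReal.ofReal (dens ε j ω) := by
  have hs : ({ω} : Set (Fin K → Fin T → Bool)) = Set.pi Set.univ fun k => {ω k} :=
    (Set.univ_pi_singleton ω).symm
  rw [lowerP, hs, Measure.pi_pi]
  have hrow : ∀ k : Fin K,
      (Measure.pi fun _ : Fin T => bern (if k = j then (1+ε)/2 else 1/2)) {ω k}
        = ENNReal.ofReal (∏ t, if ω k t then pr ε j k else 1 - pr ε j k) := by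
    intro k
    have hs2 : ({ω k} : Set (Fin T → Bool)) = Set.pi Set.univ fun t => {ω k t} :=
      (Set.univ_pi_singleton (ω k)).symm
    rw [hs2, Measure.pi_pi]
    rw [ENNReal.ofReal_prod_of_nonneg]
    · refine Finset.prod_congr rfl fun t _ => ?_
      have : (if k = j then (1+ε)/2 else 1/2) = pr ε j k := rfl
      rw [this, bern_apply (pr_nonneg h0 j k) (pr_le_one h1 j k)]
    · intro t _
      split
      · exact pr_nonneg h0 j k
      · linarith [pr_le_one h1 j k]
  rw [Finset.prod_congr rfl fun k _ => hrow k, dens, ENNReal.ofReal_prod_of_nonneg]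
  intro k _
  exact Finset.prod_nonneg fun t _ => by
    split
    · exact pr_nonneg h0 j k
    · linarith [pr_le_one h1 j k]

lemma lowerP_finset {ε : ℝ} (h0 : 0 ≤ ε) (h1 : ε ≤ 1) (j : Fin K)
    (F : Finset (Fin K → Fin T → Bool)) :
    (lowerP K T ε j ↑F).toReal = ∑ ω ∈ F, dens ε j ω := by
  have hset : (↑F : Set (Fin K → Fin T → Bool)) = ⋃ ω ∈ F, {ω} := by
    exact (Set.biUnion_of_singleton (F : Set (Fin K → Fin T → Bool))).symm
  rw [hset, measure_biUnion_finset ?_ (fun ω _ => measurableSet_singleton ω)]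
  · rw [ENNReal.toReal_sum]
    · refine Finset.sum_congr rfl fun ω _ => ?_
      rw [lowerP_singleton h0 h1, ENNReal.toReal_ofReal (dens_nonneg h0 h1 j ω)]
    · intro ω _
      rw [lowerP_singleton h0 h1]
      exact ENNReal.ofReal_ne_top
  · intro x _ y _ hxy
    simp [Function.onFun, Set.disjoint_singleton, hxy]

lemma sum_prod_eq (f : Fin K → Fin T → Bool → ℝ) :
    ∑ ω : Fin K → Fin T → Bool, ∏ k, ∏ t, f k t (ω k t)
      = ∏ k, ∏ t, (f k t true + f k t false) := by
  rw [← Fintype.prod_sum (fun k (row : Fin T → Bool) => ∏ t, f k t (row t))]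
  refine Finset.prod_congr rfl fun k _ => ?_
  rw [← Fintype.prod_sum (fun t (b : Bool) => f k t b)]
  refine Finset.prod_congr rfl fun t _ => ?_
  simp [Fintype.sum_bool]

lemma prod_if_bool (x : Fin T → Bool) (a b : ℝ) :
    (∏ t, if x t then a else b)
      = a ^ (Finset.univ.filter fun t => x t = true).card
        * b ^ (T - (Finset.univ.filter fun t => x t = true).card) := by
  rw [← Finset.prod_filter_mul_prod_filter_not Finset.univ (fun t => x t = true)]
  have hcard : (Finset.univ.filter fun t : Fin T => ¬ (x t = true)).card
      = T - (Finset.univ.filter fun t => x t = true).card := by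
    have := Finset.card_filter_add_card_filter_not
      (s := (Finset.univ : Finset (Fin T))) (p := fun t => x t = true)
    simp only [Finset.card_univ, Fintype.card_fin] at this
    omega
  congr 1
  · rw [Finset.prod_congr rfl (g := fun _ => a)
      (fun t ht => by simp [(Finset.mem_filter.1 ht).2]), Finset.prod_const]
  · rw [Finset.prod_congr rfl (g := fun _ => b)
      (fun t ht => by simp [(Finset.mem_filter.1 ht).2]), Finset.prod_const, hcard]

lemma dens_eq_prod_pow (ε : ℝ) (j : Fin K) (ω : Fin K → Fin T → Bool) :
    dens ε j ω = ∏ k, (pr ε j k) ^ (wins ω k) * (1 - pr ε j k) ^ (T - wins ω k) := by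
  exact Finset.prod_congr rfl fun k _ => prod_if_bool (ω k) _ _

lemma wins_le (ω : Fin K → Fin T → Bool) (k : Fin K) : wins ω k ≤ T := by
  have := Finset.card_filter_le (Finset.univ : Finset (Fin T)) (fun t => ω k t = true)
  simpa [Finset.card_univ, wins] using this


lemma log_lb {ε : ℝ} (hε0 : 0 < ε) (hε1 : ε ≤ 1) : ε - ε^2 ≤ Real.log (1+ε) := by
  have hpos : (0:ℝ) < 1 + ε := by linarith
  have h := Real.one_sub_inv_le_log_of_pos hpos
  have key : (1+ε)⁻¹ * (1+ε) = 1 := inv_mul_cancel₀ (ne_of_gt hpos)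
  nlinarith [pow_nonneg hε0.le 3]

lemma one_add_pow_mul (A : ℝ) (j : Fin K) :
    (∏ k : Fin K, ∏ _t : Fin T, if k = j then A else 1) = A ^ T := by
  have : ∀ k : Fin K, (∏ _t : Fin T, if k = j then A else (1:ℝ))
      = if k = j then A ^ T else 1 := by
    intro k
    rw [Finset.prod_const, Finset.card_univ, Fintype.card_fin, apply_ite (· ^ T), one_pow]
  rw [Finset.prod_congr rfl fun k _ => this k, Finset.prod_ite_eq' Finset.univ j
    (fun _ => A ^ T), if_pos (Finset.mem_univ j)]

lemma chernoff {ε : ℝ} (hε0 : 0 < ε) (hε1 : ε ≤ 1/4) (j : Fin K) :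
    ∑ ω ∈ Finset.univ.filter (fun ω : Fin K → Fin T → Bool =>
        (T:ℝ)/2 + 2*ε*T ≤ (wins ω j : ℝ)), dens ε j ω
      ≤ Real.exp (-(ε^2 * T)/2) := by
  set m : ℝ := (T:ℝ)/2 + 2*ε*T with hm
  have hT0 : (0:ℝ) ≤ T := Nat.cast_nonneg T
  have hm0 : 0 ≤ m := by rw [hm]; nlinarith
  have hε1' : ε ≤ 1 := by linarith
  have hlog := log_lb hε0 hε1'
  -- step 1 : multiply by exp (m * (ε - ε^2))
  have step1 : (∑ ω ∈ Finset.univ.filter (fun ω : Fin K → Fin T → Bool =>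
        m ≤ (wins ω j : ℝ)), dens ε j ω) * Real.exp (m*(ε-ε^2))
      ≤ ∑ ω : Fin K → Fin T → Bool, dens ε j ω * (1+ε) ^ (wins ω j) := by
    rw [Finset.sum_mul]
    refine le_trans (Finset.sum_le_sum fun ω hω => ?_)
      (Finset.sum_le_sum_of_subset_of_nonneg (Finset.filter_subset _ _)
        fun ω _ _ => mul_nonneg (dens_nonneg hε0.le hε1' j ω) (by positivity))
    have hW : m ≤ (wins ω j : ℝ) := (Finset.mem_filter.1 hω).2
    have hexp : Real.exp (m*(ε-ε^2)) ≤ (1+ε) ^ (wins ω j) := by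
      have h1 : m*(ε-ε^2) ≤ (wins ω j : ℝ) * Real.log (1+ε) :=
        mul_le_mul hW hlog (by nlinarith) (le_trans hm0 hW)
      calc Real.exp (m*(ε-ε^2)) ≤ Real.exp ((wins ω j : ℝ) * Real.log (1+ε)) :=
            Real.exp_le_exp.2 h1
        _ = (1+ε) ^ (wins ω j) := by
            rw [Real.exp_nat_mul, Real.exp_log (by linarith)]
    exact mul_le_mul_of_nonneg_left hexp (dens_nonneg hε0.le hε1' j ω)
  -- step 2 : compute the full sum
  have step2 : ∑ ω : Fin K → Fin T → Bool, dens ε j ω * (1+ε) ^ (wins ω j)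
      = (1 + (ε/2 + ε^2/2)) ^ T := by
    have hrewrite : ∀ ω : Fin K → Fin T → Bool,
        dens ε j ω * (1+ε) ^ (wins ω j)
          = ∏ k, ∏ t, ((if ω k t then pr ε j k else 1 - pr ε j k) *
              (if k = j then (if ω k t then 1+ε else 1) else 1)) := by
      intro ω
      have hpow : (1+ε : ℝ) ^ (wins ω j)
          = ∏ k, ∏ t, (if k = j then (if ω k t then 1+ε else (1:ℝ)) else 1) := by
        have : ∀ k : Fin K, (∏ t, if k = j then (if ω k t then 1+ε else (1:ℝ)) else 1)
            = if k = j then ∏ t, (if ω k t then 1+ε else (1:ℝ)) else 1 := by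
          intro k
          rw [Finset.prod_ite_irrel, Finset.prod_const, Finset.card_univ,
            Fintype.card_fin, one_pow]
        rw [Finset.prod_congr rfl fun k _ => this k,
          Finset.prod_ite_eq' Finset.univ j
            (fun k => ∏ t, (if ω k t then 1+ε else (1:ℝ))),
          if_pos (Finset.mem_univ j), prod_if_bool, one_pow, mul_one]
        rfl
      rw [dens, hpow, ← Finset.prod_mul_distrib]
      exact Finset.prod_congr rfl fun k _ => (Finset.prod_mul_distrib).symm
    rw [Finset.sum_congr rfl fun ω _ => hrewrite ω,
      sum_prod_eq (fun k t b => (if b then pr ε j k else 1 - pr ε j k) *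
        (if k = j then (if b then 1+ε else 1) else 1))]
    have : ∀ k : Fin K, ∀ _t : Fin T,
        ((if true then pr ε j k else 1 - pr ε j k) *
            (if k = j then (if true then 1+ε else 1) else 1) +
          (if false then pr ε j k else 1 - pr ε j k) *
            (if k = j then (if false then 1+ε else 1) else 1))
          = if k = j then (1 + (ε/2 + ε^2/2)) else 1 := by
      intro k _t
      by_cases h : k = j <;> simp [pr, h] <;> ring
    rw [Finset.prod_congr rfl fun k _ => Finset.prod_congr rfl fun t _ => this k t]
    exact one_add_pow_mul _ j
  -- step 3 : numeric bound
  have step3 : (1 + (ε/2 + ε^2/2) : ℝ) ^ T ≤ Real.exp ((ε/2 + ε^2/2) * T) := by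
    have h := Real.add_one_le_exp (ε/2 + ε^2/2)
    calc (1 + (ε/2 + ε^2/2) : ℝ) ^ T ≤ (Real.exp (ε/2 + ε^2/2)) ^ T := by
          apply pow_le_pow_left₀ (by nlinarith) (by linarith)
      _ = Real.exp ((ε/2 + ε^2/2) * T) := by rw [mul_comm, Real.exp_nat_mul]
  have hfin : (∑ ω ∈ Finset.univ.filter (fun ω : Fin K → Fin T → Bool =>
        m ≤ (wins ω j : ℝ)), dens ε j ω)
      ≤ Real.exp ((ε/2 + ε^2/2) * T) / Real.exp (m*(ε-ε^2)) := by
    rw [le_div_iff₀ (Real.exp_pos _)]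
    exact le_trans step1 (le_trans (le_of_eq step2) step3)
  refine le_trans hfin ?_
  rw [← Real.exp_sub, Real.exp_le_exp]
  have hkey : (0:ℝ) ≤ ε^2 * T * (1/2 - 2*ε) := by
    apply mul_nonneg (mul_nonneg (sq_nonneg ε) hT0); linarith
  rw [hm]; nlinarith


lemma dens_le_of_small {ε : ℝ} (hε0 : 0 < ε) (hε1 : ε ≤ 1) (j : Fin K)
    (ω : Fin K → Fin T → Bool) (hW : (wins ω j : ℝ) ≤ (T:ℝ)/2 + 2*ε*T) :
    dens ε j ω ≤ Real.exp (4*ε^2*T) * (((1:ℝ)/2) ^ T) ^ K := by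
  rw [dens_eq_prod_pow]
  have hbound : ∀ k : Fin K, (pr ε j k) ^ (wins ω k) * (1 - pr ε j k) ^ (T - wins ω k)
      ≤ (if k = j then Real.exp (4*ε^2*T) else 1) * ((1:ℝ)/2) ^ T := by
    intro k
    by_cases h : k = j
    · subst h
      have hq : pr ε k k = (1+ε)/2 := if_pos rfl
      rw [hq, if_pos rfl]
      set W := wins ω k with hWdef
      have hWT : W ≤ T := wins_le ω k
      have hcast : ((T - W : ℕ) : ℝ) = (T:ℝ) - W := by
        rw [Nat.cast_sub hWT]
      have h1 : ((1+ε)/2) ^ W ≤ (Real.exp ε / 2) ^ W := by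
        apply pow_le_pow_left₀ (by linarith)
        have := Real.add_one_le_exp ε; linarith
      have h2 : (1 - (1+ε)/2) ^ (T - W) ≤ (Real.exp (-ε) / 2) ^ (T - W) := by
        apply pow_le_pow_left₀ (by linarith)
        have := Real.add_one_le_exp (-ε); linarith
      have h3 : ((1+ε)/2) ^ W * (1 - (1+ε)/2) ^ (T-W)
          ≤ (Real.exp ε / 2) ^ W * (Real.exp (-ε) / 2) ^ (T - W) :=
        mul_le_mul h1 h2 (pow_nonneg (by linarith) _) (pow_nonneg (by positivity) _)
      refine le_trans h3 ?_
      have heq : (Real.exp ε / 2) ^ W * (Real.exp (-ε) / 2) ^ (T - W)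
          = Real.exp ((W:ℝ)*ε + ((T-W:ℕ):ℝ)*(-ε)) / 2 ^ T := by
        rw [div_pow, div_pow, div_mul_div_comm, ← pow_add, Nat.add_sub_cancel' hWT,
          ← Real.exp_nat_mul, ← Real.exp_nat_mul, ← Real.exp_add]
      rw [heq]
      have h4 : Real.exp ((W:ℝ)*ε + ((T-W:ℕ):ℝ)*(-ε)) ≤ Real.exp (4*ε^2*T) := by
        rw [Real.exp_le_exp, hcast]
        nlinarith
      calc Real.exp ((W:ℝ)*ε + ((T-W:ℕ):ℝ)*(-ε)) / 2 ^ T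
          ≤ Real.exp (4*ε^2*T) / 2 ^ T := by gcongr
        _ = Real.exp (4*ε^2*T) * ((1:ℝ)/2) ^ T := by
            rw [div_pow, one_pow, div_eq_mul_inv, inv_eq_one_div] -- fix later
    · have hq : pr ε j k = 1/2 := if_neg h
      rw [hq, if_neg h, one_mul]
      have : (1 - (1:ℝ)/2) = 1/2 := by norm_num
      rw [this, ← pow_add, Nat.add_sub_cancel' (wins_le ω k)]
  calc (∏ k, (pr ε j k) ^ (wins ω k) * (1 - pr ε j k) ^ (T - wins ω k))
      ≤ ∏ k, (if k = j then Real.exp (4*ε^2*T) else 1) * ((1:ℝ)/2) ^ T := by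
        refine Finset.prod_le_prod (fun k _ => ?_) (fun k _ => hbound k)
        exact mul_nonneg (pow_nonneg (pr_nonneg hε0.le j k) _)
          (pow_nonneg (by linarith [pr_le_one hε1 j k]) _)
    _ = Real.exp (4*ε^2*T) * (((1:ℝ)/2) ^ T) ^ K := by
        rw [Finset.prod_mul_distrib, Finset.prod_ite_eq' Finset.univ j
          (fun _ => Real.exp (4*ε^2*T)), if_pos (Finset.mem_univ j),
          Finset.prod_const, Finset.card_univ, Fintype.card_fin]

lemma part2_sum {ε : ℝ} [NeZero K] (hε0 : 0 < ε) (hε1 : ε ≤ 1) :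
    ∑ j : Fin K, ∑ ω ∈ Finset.univ.filter (fun ω : Fin K → Fin T → Bool =>
        FTL ω = j ∧ ¬ ((T:ℝ)/2 + 2*ε*T ≤ (wins ω j : ℝ))), dens ε j ω
      ≤ Real.exp (4*ε^2*T) := by
  set C := Real.exp (4*ε^2*T) * (((1:ℝ)/2) ^ T) ^ K with hC
  have hCpos : 0 ≤ C := by positivity
  have step1 : ∑ j : Fin K, ∑ ω ∈ Finset.univ.filter (fun ω : Fin K → Fin T → Bool =>
        FTL ω = j ∧ ¬ ((T:ℝ)/2 + 2*ε*T ≤ (wins ω j : ℝ))), dens ε j ω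
      ≤ ∑ j : Fin K, (((Finset.univ.filter (fun ω : Fin K → Fin T → Bool =>
          FTL ω = j)).card : ℝ)) * C := by
    refine Finset.sum_le_sum fun j _ => ?_
    calc ∑ ω ∈ Finset.univ.filter (fun ω : Fin K → Fin T → Bool =>
          FTL ω = j ∧ ¬ ((T:ℝ)/2 + 2*ε*T ≤ (wins ω j : ℝ))), dens ε j ω
        ≤ ∑ _ω ∈ Finset.univ.filter (fun ω : Fin K → Fin T → Bool =>
          FTL ω = j ∧ ¬ ((T:ℝ)/2 + 2*ε*T ≤ (wins ω j : ℝ))), C := by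
          refine Finset.sum_le_sum fun ω hω => ?_
          have h2 := (Finset.mem_filter.1 hω).2.2
          exact dens_le_of_small hε0 hε1 j ω (le_of_not_ge h2)
      _ = ((Finset.univ.filter (fun ω : Fin K → Fin T → Bool =>
          FTL ω = j ∧ ¬ ((T:ℝ)/2 + 2*ε*T ≤ (wins ω j : ℝ)))).card : ℝ) * C := by
          rw [Finset.sum_const, nsmul_eq_mul]
      _ ≤ _ := by
          apply mul_le_mul_of_nonneg_right _ hCpos
          have hsub : Finset.univ.filter (fun ω : Fin K → Fin T → Bool =>
              FTL ω = j ∧ ¬ ((T:ℝ)/2 + 2*ε*T ≤ (wins ω j : ℝ)))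
              ⊆ Finset.univ.filter (fun ω : Fin K → Fin T → Bool => FTL ω = j) := by
            intro ω hω
            rw [Finset.mem_filter] at hω ⊢
            exact ⟨hω.1, hω.2.1⟩
          exact_mod_cast Finset.card_le_card hsub
  refine le_trans step1 ?_
  rw [← Finset.sum_mul]
  have hcard : ∑ j : Fin K, ((Finset.univ.filter (fun ω : Fin K → Fin T → Bool =>
      FTL ω = j)).card : ℝ) = ((2:ℝ) ^ T) ^ K := by
    rw [← Nat.cast_sum]
    rw [← Finset.card_eq_sum_card_fiberwise (f := fun ω : Fin K → Fin T → Bool => FTL ω)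
      (fun ω _ => Finset.mem_univ _)]
    rw [Finset.card_univ]
    rw [show Fintype.card (Fin K → Fin T → Bool) = (2 ^ T) ^ K by
      simp [Fintype.card_fun]]
    push_cast
    ring
  rw [hcard, hC]
  rw [mul_comm (Real.exp (4*ε^2*T)) _, ← mul_assoc, ← mul_pow, ← mul_pow]
  norm_num

end FTLproof

open FTLproof

set_option maxRecDepth 8000

theorem FTL_makes_mistakes :
    ∃ c > (0 : ℝ), ∃ d > (0 : ℝ), ∃ K₀ : ℕ, ∃ hK₀ : 1 ≤ K₀,
      ∀ K : ℕ, ∀ hK : K₀ ≤ K, ∀ ε : ℝ, 0 < ε → ε < d →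
        ∀ T : ℕ, c * Real.log K / (2 * ε ^ 2) ≤ T → (T : ℝ) ≤ c * Real.log K / ε ^ 2 →
          (∑ j : Fin K,
              ((lowerP K T ε j) {ω | @FTL K T ⟨by omega⟩ ω = j}).toReal)
            ≤ K / 4 := by
  refine ⟨1/8, by norm_num, 1/4, by norm_num, 2^96, by norm_num, ?_⟩
  intro K hK ε hε0 hεd T hT1 hT2
  haveI hNZ : NeZero K := ⟨by omega⟩
  have hε14 : ε ≤ 1/4 := le_of_lt hεd
  have hε1 : ε ≤ 1 := by linarith
  have hεsq : (0:ℝ) < ε^2 := by positivity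
  have hK2 : (2:ℝ)^96 ≤ (K:ℝ) := by
    calc (2:ℝ)^96 = ((2^96 : ℕ) : ℝ) := by push_cast; ring
      _ ≤ (K:ℝ) := by exact_mod_cast hK
  have hKpos : (0:ℝ) < K := lt_of_lt_of_le (by positivity) hK2
  have hlog2 : (0:ℝ) < Real.log 2 := Real.log_pos (by norm_num)
  have hlogK : 96 * Real.log 2 ≤ Real.log K := by
    calc 96 * Real.log 2 = Real.log ((2:ℝ)^96) := by rw [Real.log_pow]; push_cast; ring
      _ ≤ Real.log K := Real.log_le_log (by positivity) hK2
  have hlogKpos : (0:ℝ) < Real.log K := by linarith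
  -- bounds on ε² T
  have hA : Real.log K / 16 ≤ ε^2 * (T:ℝ) := by
    rw [div_le_iff₀ (by positivity : (0:ℝ) < 2*ε^2)] at hT1
    nlinarith
  have hB : ε^2 * (T:ℝ) ≤ Real.log K / 8 := by
    rw [le_div_iff₀ hεsq] at hT2
    
    nlinarith
  -- rewrite each summand as a finite sum of densities
  have hterm : ∀ j : Fin K, ((lowerP K T ε j) {ω | FTL ω = j}).toReal
      = ∑ ω ∈ Finset.univ.filter (fun ω : Fin K → Fin T → Bool => FTL ω = j),
          dens ε j ω := by
    intro j
    have hset : {ω : Fin K → Fin T → Bool | FTL ω = j}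
        = ↑(Finset.univ.filter (fun ω : Fin K → Fin T → Bool => FTL ω = j)) := by
      ext ω; simp
    rw [hset, lowerP_finset hε0.le hε1]
  rw [Finset.sum_congr rfl fun j _ => hterm j]
  have hsplit : ∀ j : Fin K,
      ∑ ω ∈ Finset.univ.filter (fun ω : Fin K → Fin T → Bool => FTL ω = j), dens ε j ω
        ≤ Real.exp (-(ε^2 * T)/2)
          + ∑ ω ∈ Finset.univ.filter (fun ω : Fin K → Fin T → Bool =>
              FTL ω = j ∧ ¬ ((T:ℝ)/2 + 2*ε*T ≤ (wins ω j : ℝ))), dens ε j ω := by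
    intro j
    rw [← Finset.sum_filter_add_sum_filter_not
      (Finset.univ.filter (fun ω : Fin K → Fin T → Bool => FTL ω = j))
      (fun ω => (T:ℝ)/2 + 2*ε*T ≤ (wins ω j : ℝ))]
    apply add_le_add
    · refine le_trans (Finset.sum_le_sum_of_subset_of_nonneg
        (Finset.filter_subset_filter _ (Finset.filter_subset _ _))
        (fun ω _ _ => dens_nonneg hε0.le hε1 j ω)) (chernoff hε0 hε14 j)
    · rw [Finset.filter_filter]
  have hexp1 : Real.exp (-(ε^2 * T)/2) ≤ 1/8 := by
    have h1 : -(ε^2 * (T:ℝ))/2 ≤ Real.log (1/8) := by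
      rw [show ((1:ℝ)/8) = ((2:ℝ)⁻¹)^3 from by norm_num, Real.log_pow, Real.log_inv]
      push_cast
      linarith
    calc Real.exp (-(ε^2 * T)/2) ≤ Real.exp (Real.log (1/8)) := Real.exp_le_exp.2 h1
      _ = 1/8 := Real.exp_log (by norm_num)
  have hexp2 : Real.exp (4*ε^2*T) ≤ (K:ℝ)/8 := by
    have h1 : 4*ε^2*(T:ℝ) ≤ Real.log ((K:ℝ)/8) := by
      rw [Real.log_div (ne_of_gt hKpos) (by norm_num),
        show ((8:ℝ)) = (2:ℝ)^3 from by norm_num, Real.log_pow]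
      push_cast
      linarith
    calc Real.exp (4*ε^2*T) ≤ Real.exp (Real.log ((K:ℝ)/8)) := Real.exp_le_exp.2 h1
      _ = (K:ℝ)/8 := Real.exp_log (by positivity)
  calc ∑ j : Fin K, ∑ ω ∈ Finset.univ.filter
        (fun ω : Fin K → Fin T → Bool => FTL ω = j), dens ε j ω
      ≤ ∑ j : Fin K, (Real.exp (-(ε^2 * T)/2)
          + ∑ ω ∈ Finset.univ.filter (fun ω : Fin K → Fin T → Bool =>
              FTL ω = j ∧ ¬ ((T:ℝ)/2 + 2*ε*T ≤ (wins ω j : ℝ))), dens ε j ω) :=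
        Finset.sum_le_sum fun j _ => hsplit j
    _ = (K:ℝ) * Real.exp (-(ε^2 * T)/2)
          + ∑ j : Fin K, ∑ ω ∈ Finset.univ.filter (fun ω : Fin K → Fin T → Bool =>
              FTL ω = j ∧ ¬ ((T:ℝ)/2 + 2*ε*T ≤ (wins ω j : ℝ))), dens ε j ω := by
        rw [Finset.sum_add_distrib, Finset.sum_const, Finset.card_univ,
          Fintype.card_fin, nsmul_eq_mul]
    _ ≤ (K:ℝ) * Real.exp (-(ε^2 * T)/2) + Real.exp (4*ε^2*T) :=
        add_le_add_right (part2_sum hε0 hε1) _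
    _ ≤ (K:ℝ) * (1/8) + (K:ℝ)/8 :=
        add_le_add (mul_le_mul_of_nonneg_left hexp1 hKpos.le) hexp2
    _ ≤ (K:ℝ)/4 := by linarith
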